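/- For every event E, the lower probability satisfies P̲(E) ≤ Q̄(E): if P̲(E) = x, then for every a < x there is a strategy of Reality starting from capital a guaranteeing that E occurs and sup_n K_n ≤ 1, provided Skeptic keeps his capital nonnegative. -/
import Mathlib


open Filter Finset

/-- Capital process in the coin-tossing game with initial capital `a`. -/
def cap (a : ℝ) (p M x : ℕ → ℝ) : ℕ → ℝ
  | 0 => a
  | n + 1 => cap a p M x n + M n * (x n - p n)

/-- Forecaster's moves are probabilities in `[0,1]`. -/
def ValidP (p : ℕ → ℝ) : Prop := ∀ n, p n ∈ Set.Icc (0 : ℝ) 1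

/-- Reality's moves are in `{0,1}`. -/
def ValidX (x : ℕ → ℝ) : Prop := ∀ n, x n = 0 ∨ x n = 1

/-- A Skeptic strategy reads Forecaster's moves up to round `n` and Reality's
moves before round `n`. -/
def SAdapted (S : (ℕ → ℝ) → (ℕ → ℝ) → ℕ → ℝ) : Prop :=
  ∀ p p' x x' : ℕ → ℝ, ∀ n, (∀ k ≤ n, p k = p' k) → (∀ k < n, x k = x' k) →
    S p x n = S p' x' n

/-- A Reality strategy reads Forecaster's and Skeptic's moves up to round `n`. -/
def RAdapted (R : (ℕ → ℝ) → (ℕ → ℝ) → ℕ → ℝ) : Prop :=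
  ∀ p p' M M' : ℕ → ℝ, ∀ n, (∀ k ≤ n, p k = p' k) → (∀ k ≤ n, M k = M' k) →
    R p M n = R p' M' n

/-- Upper probability of an event `E` (a set of paths `(p, x)`). -/
noncomputable def UpperP (E : (ℕ → ℝ) → (ℕ → ℝ) → Prop) : ℝ :=
  sInf {a | ∃ S, SAdapted S ∧ ∀ p x, ValidP p → ValidX x →
    (∀ n, 0 ≤ cap a p (S p x) x n) ∧
    (E p x → ∀ ε : ℝ, 0 < ε → ∃ n, 1 - ε < cap a p (S p x) x n)}

/-- Lower probability. -/
noncomputable def LowerP (E : (ℕ → ℝ) → (ℕ → ℝ) → Prop) : ℝ :=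
  1 - UpperP (fun p x => ¬ E p x)

/-- The set of initial capitals `a` for which some Reality strategy guarantees
the event and keeps the capital at most 1, against every Forecaster and every
Skeptic keeping the capital nonnegative. -/
def QSet (E : (ℕ → ℝ) → (ℕ → ℝ) → Prop) : Set ℝ :=
  {a | ∃ R, RAdapted R ∧ ∀ p M : ℕ → ℝ, ValidP p →
    ValidX (R p M) ∧
    ((∀ n, 0 ≤ cap a p M (R p M) n) →
      (E p (R p M) ∧ ∀ n, cap a p M (R p M) n ≤ 1))}

noncomputable def UpperQ (E : (ℕ → ℝ) → (ℕ → ℝ) → Prop) : ℝ := sSup (QSet E)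

noncomputable def LowerQ (E : (ℕ → ℝ) → (ℕ → ℝ) → Prop) : ℝ :=
  1 - UpperQ (fun p x => ¬ E p x)

section Aux

-- Reality's strategy: at round `n`, choose `x n ∈ {0,1}` making the increment nonpositive.
open scoped Classical in
noncomputable def Rx (S : (ℕ → ℝ) → (ℕ → ℝ) → ℕ → ℝ) (p M : ℕ → ℝ) : ℕ → ℝ
  | n => if 0 ≤ M n + S p (fun k => if h : k < n then Rx S p M k else 0) n then (0:ℝ) else 1
decreasing_by all_goals exact h

lemma Rx_valid (S : (ℕ → ℝ) → (ℕ → ℝ) → ℕ → ℝ) (p M : ℕ → ℝ) : ValidX (Rx S p M) := by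
  intro n
  rw [Rx]
  split <;> simp

lemma Rx_spec (S : (ℕ → ℝ) → (ℕ → ℝ) → ℕ → ℝ) (hS : SAdapted S) (p M : ℕ → ℝ) (n : ℕ) :
    Rx S p M n = if 0 ≤ M n + S p (Rx S p M) n then (0:ℝ) else 1 := by
  classical
  rw [Rx]
  have : S p (fun k => if h : k < n then Rx S p M k else 0) n = S p (Rx S p M) n := by
    apply hS
    · intro k _; rfl
    · intro k hk; simp [hk]
  rw [this]

lemma Rx_adapted (S : (ℕ → ℝ) → (ℕ → ℝ) → ℕ → ℝ) (hS : SAdapted S) :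
    RAdapted (fun p M => Rx S p M) := by
  intro p p' M M' n
  induction n using Nat.strong_induction_on with
  | _ n ih =>
    intro hp hM
    show Rx S p M n = Rx S p' M' n
    rw [Rx_spec S hS, Rx_spec S hS]
    have hx : ∀ k < n, Rx S p M k = Rx S p' M' k := by
      intro k hk
      exact ih k hk (fun j hj => hp j (hj.trans hk.le)) (fun j hj => hM j (hj.trans hk.le))
    have hSeq : S p (Rx S p M) n = S p' (Rx S p' M') n := hS _ _ _ _ n hp hx
    rw [hM n le_rfl, hSeq]

lemma cap_zero (a : ℝ) (p M x : ℕ → ℝ) : cap a p M x 0 = a := rfl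

lemma cap_succ (a : ℝ) (p M x : ℕ → ℝ) (n : ℕ) :
    cap a p M x (n + 1) = cap a p M x n + M n * (x n - p n) := rfl

/-- The key combined-capital bound: the sum of the two capitals is nonincreasing. -/
lemma cap_sum_le (S : (ℕ → ℝ) → (ℕ → ℝ) → ℕ → ℝ) (hS : SAdapted S) (a b : ℝ)
    (p M : ℕ → ℝ) (hp : ValidP p) (n : ℕ) :
    cap b p M (Rx S p M) n + cap a p (S p (Rx S p M)) (Rx S p M) n ≤ b + a := by
  set x := Rx S p M with hxdef
  induction n with
  | zero => simp [cap_zero]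
  | succ n ih =>
    rw [cap_succ, cap_succ]
    have hnp : (M n + S p x n) * (x n - p n) ≤ 0 := by
      have hxn : x n = if 0 ≤ M n + S p x n then (0:ℝ) else 1 := Rx_spec S hS p M n
      obtain ⟨hp0, hp1⟩ := hp n
      by_cases h : 0 ≤ M n + S p x n
      · rw [hxn, if_pos h]
        have : (0:ℝ) - p n ≤ 0 := by linarith
        exact mul_nonpos_of_nonneg_of_nonpos h this
      · rw [hxn, if_neg h]
        have h' : M n + S p x n ≤ 0 := le_of_not_ge h
        have : (0:ℝ) ≤ 1 - p n := by linarith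
        exact mul_nonpos_of_nonpos_of_nonneg h' this
    nlinarith [hnp]

/-- The main construction: if Skeptic can witness `a ∈` the `UpperP (¬E)` set, then any
`b < 1 - a` belongs to `QSet E`. -/
lemma mem_QSet_of_skeptic (E : (ℕ → ℝ) → (ℕ → ℝ) → Prop) (a b : ℝ)
    (S : (ℕ → ℝ) → (ℕ → ℝ) → ℕ → ℝ) (hS : SAdapted S)
    (hSa : ∀ p x, ValidP p → ValidX x →
      (∀ n, 0 ≤ cap a p (S p x) x n) ∧
      ((¬ E p x) → ∀ ε : ℝ, 0 < ε → ∃ n, 1 - ε < cap a p (S p x) x n))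
    (hb : b < 1 - a) : b ∈ QSet E := by
  refine ⟨fun p M => Rx S p M, Rx_adapted S hS, ?_⟩
  intro p M hp
  refine ⟨Rx_valid S p M, ?_⟩
  intro hnn
  set x := Rx S p M with hxdef
  obtain ⟨hScap, hSwin⟩ := hSa p x hp (Rx_valid S p M)
  have hsum : ∀ n, cap b p M x n + cap a p (S p x) x n ≤ b + a :=
    cap_sum_le S hS a b p M hp
  constructor
  · by_contra hE
    obtain ⟨n, hn⟩ := hSwin hE (1 - a - b) (by linarith)
    have h1 : cap a p (S p x) x n ≤ b + a - cap b p M x n := by linarith [hsum n]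
    have h2 : 0 ≤ cap b p M x n := hnn n
    linarith
  · intro n
    have := hScap n
    linarith [hsum n]

lemma QSet_bddAbove (E : (ℕ → ℝ) → (ℕ → ℝ) → Prop) : BddAbove (QSet E) := by
  refine ⟨1, ?_⟩
  rintro b ⟨R, _, hR⟩
  by_contra hb
  push_neg at hb
  obtain ⟨_, hcap⟩ := hR (fun _ => 0) (fun _ => 0) (fun n => ⟨le_rfl, zero_le_one⟩)
  have hconst : ∀ n, cap b (fun _ => 0) (fun _ => 0) (R (fun _ => 0) (fun _ => 0)) n = b := by
    intro n
    induction n with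
    | zero => rfl
    | succ n ih => rw [cap_succ, ih]; ring
  have := (hcap (fun n => by rw [hconst n]; linarith)).2 0
  rw [hconst 0] at this
  linarith

end Aux

/-- For every event `E`, the lower probability is at most `Q̄(E)`. -/
theorem stmt_12 (E : (ℕ → ℝ) → (ℕ → ℝ) → Prop) : LowerP E ≤ UpperQ E := by
  rw [LowerP, UpperP, UpperQ]
  set A := {a | ∃ S, SAdapted S ∧ ∀ p x, ValidP p → ValidX x →
    (∀ n, 0 ≤ cap a p (S p x) x n) ∧
    ((fun p x => ¬ E p x) p x → ∀ ε : ℝ, 0 < ε → ∃ n, 1 - ε < cap a p (S p x) x n)} with hA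
  have hAne : A.Nonempty := by
    refine ⟨1, fun _ _ => 0, ?_, ?_⟩
    · intro p p' x x' n _ _; rfl
    · intro p x _ _
      have hone : ∀ n, cap 1 p (fun _ => (0:ℝ)) x n = 1 := by
        intro n
        induction n with
        | zero => rfl
        | succ n ih => rw [cap_succ, ih]; ring
      constructor
      · intro n
        show 0 ≤ cap 1 p (fun _ => (0:ℝ)) x n
        rw [hone n]; norm_num
      · intro _ ε hε
        refine ⟨0, ?_⟩
        show 1 - ε < cap 1 p (fun _ => (0:ℝ)) x 0
        rw [hone 0]; linarith
  by_contra hlt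
  push_neg at hlt
  set y : ℝ := (sSup (QSet E) + (1 - sInf A)) / 2 with hy
  have hy1 : sSup (QSet E) < y := by rw [hy]; linarith
  have hy2 : y < 1 - sInf A := by rw [hy]; linarith
  have : sInf A < 1 - y := by linarith
  obtain ⟨a, haA, ha⟩ := exists_lt_of_csInf_lt hAne this
  obtain ⟨S, hS, hSa⟩ := haA
  have hyQ : y ∈ QSet E := mem_QSet_of_skeptic E a y S hS hSa (by linarith)
  exact absurd (le_csSup (QSet_bddAbove E) hyQ) (not_le.mpr hy1)
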